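/- Let n_2/n_1 be a rational number with n_1, n_2 coprime positive integers, n_2 < n_1, n_1 > 1, with finite continued fraction expansion [a_0; a_1, …, a_L], and let r_0 be a real number with continued fraction expansion [b_0; b_1, …, b_M] (finite or infinite). If |r_0 − n_2/n_1| < 1/(4 n_1 (n_1 − 1)), then one of the following holds: (i) b_i = a_i for all i = 0, 1, …, L; or (ii) b_i = a_i for i = 0, 1, …, L−1, b_L = a_L − 1, and b_{L+1} = 1. -/

import Mathlib

/-- The remainders `r_0, r_1, r_2, …` of the continued fraction algorithm
applied to a real number `r`: `r_0 = r - ⌊r⌋` and `r_{i+1} = 1/r_i - ⌊1/r_i⌋`. -/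
noncomputable def cfRem (r : ℝ) : ℕ → ℝ
  | 0 => Int.fract r
  | i + 1 => Int.fract (cfRem r i)⁻¹

/-- The partial quotients `b_0, b_1, b_2, …` of the continued fraction
expansion of a real number `r`: `b_0 = ⌊r⌋` and `b_{i+1} = ⌊1/r_i⌋`. -/
noncomputable def cfB (r : ℝ) : ℕ → ℤ
  | 0 => ⌊r⌋
  | i + 1 => ⌊(cfRem r i)⁻¹⌋

lemma cfRem_fract (s : ℝ) : ∀ i, cfRem (Int.fract s) i = cfRem s i
  | 0 => by simp [cfRem, Int.fract_fract]
  | (n+1) => by simp [cfRem, cfRem_fract s n]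

lemma cfRem_succ (r : ℝ) : ∀ i, cfRem r (i+1) = cfRem (Int.fract r)⁻¹ i
  | 0 => by simp [cfRem]
  | (n+1) => by
    have h1 : cfRem r (n+1+1) = Int.fract (cfRem r (n+1))⁻¹ := rfl
    have h2 : cfRem (Int.fract r)⁻¹ (n+1) = Int.fract (cfRem (Int.fract r)⁻¹ n)⁻¹ := rfl
    rw [h1, h2, cfRem_succ r n]

lemma cfB_succ (r : ℝ) : ∀ i, cfB r (i+1) = cfB (Int.fract r)⁻¹ i
  | 0 => by simp [cfB, cfRem]
  | (n+1) => by
    have h1 : cfB r (n+1+1) = ⌊(cfRem r (n+1))⁻¹⌋ := rfl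
    have h2 : cfB (Int.fract r)⁻¹ (n+1) = ⌊(cfRem (Int.fract r)⁻¹ n)⁻¹⌋ := rfl
    rw [h1, h2, cfRem_succ r n]

lemma cfB_fract (s : ℝ) (i : ℕ) : cfB (Int.fract s) (i+1) = cfB s (i+1) := by
  show ⌊(cfRem (Int.fract s) i)⁻¹⌋ = ⌊(cfRem s i)⁻¹⌋
  rw [cfRem_fract]

set_option maxHeartbeats 2000000 in
theorem key : ∀ (L : ℕ) (n₁ n₂ : ℤ), 1 < n₁ → 0 < n₂ → n₂ < n₁ → Int.gcd n₂ n₁ = 1 →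
    cfRem ((n₂:ℝ)/(n₁:ℝ)) L = 0 → (∀ i < L, cfRem ((n₂:ℝ)/(n₁:ℝ)) i ≠ 0) →
    ∀ r : ℝ, |r - (n₂:ℝ)/(n₁:ℝ)| < 1/(4*(n₁:ℝ)*((n₁:ℝ)-1)) →
    ((∀ i ≤ L, cfB r i = cfB ((n₂:ℝ)/(n₁:ℝ)) i) ∨
     ((∀ i < L, cfB r i = cfB ((n₂:ℝ)/(n₁:ℝ)) i) ∧
       cfB r L = cfB ((n₂:ℝ)/(n₁:ℝ)) L - 1 ∧ cfB r (L+1) = 1)) := by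
  intro L
  induction L with
  | zero =>
    intro n₁ n₂ hn1 hn2 h21 _ hterm _ r _
    exfalso
    have hN1 : (1:ℝ) < (n₁:ℝ) := by exact_mod_cast hn1
    have hx0 : (0:ℝ) < (n₂:ℝ)/(n₁:ℝ) := div_pos (by exact_mod_cast hn2) (by linarith)
    have hx1 : (n₂:ℝ)/(n₁:ℝ) < 1 := (div_lt_one (by linarith)).2 (by exact_mod_cast h21)
    have h0 : cfRem ((n₂:ℝ)/(n₁:ℝ)) 0 = (n₂:ℝ)/(n₁:ℝ) := Int.fract_eq_self.2 ⟨hx0.le, hx1⟩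
    rw [hterm] at h0
    exact absurd h0.symm (ne_of_gt hx0)
  | succ L' IH =>
    intro n₁ n₂ hn1 hn2 h21 hcop hterm hnonterm r hr
    set A : ℝ := (n₁:ℝ) with hA
    set B : ℝ := (n₂:ℝ) with hB
    set x : ℝ := B/A with hxdef
    set e : ℝ := 1/(4*A*(A-1)) with hedef
    clear_value e
    clear_value x
    clear_value A
    clear_value B
    have hN1 : (2:ℝ) ≤ A := by rw [hA]; exact_mod_cast hn1
    have hN2 : (1:ℝ) ≤ B := by rw [hB]; exact_mod_cast hn2
    have h21R : B + 1 ≤ A := by rw [hA, hB]; exact_mod_cast h21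
    have hApos : (0:ℝ) < A := by linarith
    have hx0 : 0 < x := by rw [hxdef]; exact div_pos (by linarith) hApos
    have hx1 : x < 1 := by rw [hxdef]; exact (div_lt_one hApos).2 (by linarith)
    have hfx : Int.fract x = x := Int.fract_eq_self.2 ⟨hx0.le, hx1⟩
    have hden : (0:ℝ) < 4*A*(A-1) := by nlinarith
    have hA0 : A ≠ 0 := by linarith
    have hAm1 : A - 1 ≠ 0 := by intro h; rw [sub_eq_zero] at h; linarith
    have he0 : 0 < e := by rw [hedef]; exact div_pos one_pos hden
    have heq : e * (4*A*(A-1)) = 1 := by rw [hedef]; exact one_div_mul_cancel hden.ne'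
    have hxA : x * A = B := by rw [hxdef]; field_simp
    have hr1 : x - e < r := by have := abs_lt.1 hr; linarith [this.1]
    have hr2 : r < x + e := by have := abs_lt.1 hr; linarith [this.2]
    -- x ≥ 1/A, x ≤ 1 - 1/A, e < 1/(2A)
    have hxlb : 1/A ≤ x := by rw [hxdef]; gcongr
    have hxub : x ≤ 1 - 1/A := by
      rw [hxdef]
      rw [div_le_iff₀ hApos]
      have : (1 - 1/A)*A = A - 1 := by field_simp
      rw [this]; linarith
    have heA : e ≤ 1/(4*A) := by
      rw [hedef]
      apply one_div_le_one_div_of_le (by linarith)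
      nlinarith
    -- bounds on r
    have hrpos : 0 < r := by
      have h1 : 1/A - 1/(4*A) ≤ x - e := by linarith
      have h2 : 1/A - 1/(4*A) = (3/4)*(1/A) := by ring
      have h3 : 0 < 1/A := by positivity
      nlinarith
    have hrlt1 : r < 1 := by
      have h1 : 1/(4*A) < 1/A := by
        apply one_div_lt_one_div_of_lt hApos; linarith
      linarith
    have hfr : Int.fract r = r := Int.fract_eq_self.2 ⟨hrpos.le, hrlt1⟩
    have hB0r : cfB r 0 = 0 := by
      show ⌊r⌋ = 0
      rw [Int.floor_eq_zero_iff]; exact ⟨hrpos.le, hrlt1⟩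
    have hB0x : cfB x 0 = 0 := by
      show ⌊x⌋ = 0
      rw [Int.floor_eq_zero_iff]; exact ⟨hx0.le, hx1⟩
    have hRem0r : cfRem r 0 = r := hfr
    have hRem0x : cfRem x 0 = x := hfx
    by_cases hb : n₂ = 1
    · -- base case : x = 1/n₁
      subst hb
      have hB1 : B = 1 := by rw [hB]; norm_num
      have hxinv : x⁻¹ = A := by rw [hxdef, hB1]; simp
      have hRem1x : cfRem x 1 = 0 := by
        show Int.fract (cfRem x 0)⁻¹ = 0
        rw [hRem0x, hxinv, hA, Int.fract_intCast]
      have hL0 : L' = 0 := by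
        by_contra h
        exact hnonterm 1 (by omega) hRem1x
      subst hL0
      have hBx1 : cfB x 1 = n₁ := by
        show ⌊(cfRem x 0)⁻¹⌋ = n₁
        rw [hRem0x, hxinv, hA, Int.floor_intCast]
      have hx1A : x = 1/A := by rw [hxdef, hB1]
      -- upper bound on 1/r
      have hup : r⁻¹ < A + 1 := by
        have hkey : 1/A - e - 1/(A+1) = (3*A-5)/(4*A*(A-1)*(A+1)) := by
          rw [hedef]; field_simp; ring
        have hnum : (0:ℝ) ≤ (3*A-5)/(4*A*(A-1)*(A+1)) := by
          apply div_nonneg (by linarith)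
          nlinarith
        have h1 : 1/(A+1) < r := by rw [hx1A] at hr1; linarith
        rw [inv_eq_one_div, div_lt_iff₀ hrpos]
        have hA1 : (0:ℝ) < A + 1 := by linarith
        calc (1:ℝ) = (A+1) * (1/(A+1)) := by field_simp
          _ < (A+1) * r := by apply mul_lt_mul_of_pos_left h1 hA1
      -- lower bound on 1/r
      have hlo : A - 1/2 < r⁻¹ := by
        have hkey : 1/(2*A) - e*(A-1/2) = (2*A-3)/(8*A*(A-1)) := by
          rw [hedef]; field_simp; ring
        have hnum : (0:ℝ) ≤ (2*A-3)/(8*A*(A-1)) := by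
          apply div_nonneg (by linarith); nlinarith
        have h2 : (A - 1/2) * r < 1 := by
          have hr2' : r < 1/A + e := by rw [hx1A] at hr2; linarith
          have hA2 : (0:ℝ) < A - 1/2 := by linarith
          calc (A - 1/2) * r < (A - 1/2) * (1/A + e) := by
                apply mul_lt_mul_of_pos_left hr2' hA2
            _ = 1 - (1/(2*A) - e*(A-1/2)) := by field_simp; ring
            _ ≤ 1 := by linarith
        rw [inv_eq_one_div, lt_div_iff₀ hrpos]
        linarith [mul_comm r (A - 1/2)]
      by_cases hc : A ≤ r⁻¹
      · -- floor 1/r = n₁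
        have hfl : ⌊r⁻¹⌋ = n₁ := by
          rw [Int.floor_eq_iff]
          constructor
          · rw [← hA]; linarith
          · push_cast; rw [← hA]; linarith
        have hBr1 : cfB r 1 = n₁ := by
          show ⌊(cfRem r 0)⁻¹⌋ = n₁
          rw [hRem0r, hfl]
        left
        intro i hi
        interval_cases i
        · rw [hB0r, hB0x]
        · rw [hBr1, hBx1]
      · push_neg at hc
        have hfl : ⌊r⁻¹⌋ = n₁ - 1 := by
          rw [Int.floor_eq_iff]
          constructor
          · push_cast; rw [← hA]; linarith
          · push_cast; rw [← hA]; linarith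
        have hBr1 : cfB r 1 = n₁ - 1 := by
          show ⌊(cfRem r 0)⁻¹⌋ = n₁ - 1
          rw [hRem0r, hfl]
        have hRem1r : cfRem r 1 = r⁻¹ - (A - 1) := by
          show Int.fract (cfRem r 0)⁻¹ = r⁻¹ - (A - 1)
          rw [hRem0r, Int.fract, hfl]
          push_cast; rw [← hA]
        have ht1 : 1/2 < cfRem r 1 := by rw [hRem1r]; linarith
        have ht2 : cfRem r 1 < 1 := by rw [hRem1r]; linarith
        have hBr2 : cfB r 2 = 1 := by
          show ⌊(cfRem r 1)⁻¹⌋ = 1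
          have hup2 : (cfRem r 1)⁻¹ < 2 := by
            rw [inv_eq_one_div, div_lt_iff₀ (by linarith)]; linarith
          have hlo2 : (1:ℝ) ≤ (cfRem r 1)⁻¹ := by
            rw [inv_eq_one_div, le_div_iff₀ (by linarith)]; linarith
          rw [Int.floor_eq_iff]
          constructor
          · push_cast; linarith
          · push_cast; linarith
        right
        refine ⟨?_, ?_, ?_⟩
        · intro i hi
          interval_cases i
          rw [hB0r, hB0x]
        · rw [hBr1, hBx1]
        · exact hBr2
    · -- inductive step : n₂ ≥ 2
      have hn2' : 2 ≤ n₂ := by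
        rcases lt_or_ge n₂ 2 with h | h
        · omega
        · exact h
      have hBge2 : (2:ℝ) ≤ B := by rw [hB]; exact_mod_cast hn2'
      set n₃ : ℤ := n₁ % n₂ with hn3def
      set q : ℤ := n₁ / n₂ with hqdef
      have hdecomp : n₂ * q + n₃ = n₁ := Int.mul_ediv_add_emod n₁ n₂
      have hn3nonneg : 0 ≤ n₃ := Int.emod_nonneg n₁ (by omega)
      have hn3lt : n₃ < n₂ := Int.emod_lt_of_pos n₁ (by omega)
      clear_value n₃ q
      have hn3pos : 0 < n₃ := by
        rcases hn3nonneg.lt_or_eq with h | h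
        · exact h
        · exfalso
          have hdvd : n₂ ∣ n₁ := by
            refine ⟨q, ?_⟩
            omega
          have hd2 : n₂ ∣ (Int.gcd n₂ n₁ : ℤ) := Int.dvd_coe_gcd dvd_rfl hdvd
          rw [hcop] at hd2
          have := Int.le_of_dvd one_pos hd2
          omega
      have hcop'' : Int.gcd n₃ n₂ = 1 := by
        have h2 : (Int.gcd n₃ n₂ : ℤ) ∣ n₂ := Int.gcd_dvd_right _ _
        have h3 : (Int.gcd n₃ n₂ : ℤ) ∣ n₁ := by
          rw [← hdecomp]; exact dvd_add (h2.mul_right q) (Int.gcd_dvd_left _ _)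
        have h4 : (Int.gcd n₃ n₂ : ℤ) ∣ (Int.gcd n₂ n₁ : ℤ) := Int.dvd_coe_gcd h2 h3
        rw [hcop] at h4
        exact Nat.dvd_one.mp (by exact_mod_cast h4)
      set C : ℝ := (n₃:ℝ) with hC
      clear_value C
      have hC0 : (1:ℝ) ≤ C := by rw [hC]; exact_mod_cast hn3pos
      have hCB : C + 1 ≤ B := by rw [hC, hB]; exact_mod_cast hn3lt
      have hBpos : (0:ℝ) < B := by linarith
      have hB0 : B ≠ 0 := hBpos.ne'
      have hBm1 : B - 1 ≠ 0 := by intro h; rw [sub_eq_zero] at h; linarith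
      have hβden : (0:ℝ) < 4*B*(B-1) := by nlinarith
      have hxinv : x⁻¹ = A/B := by rw [hxdef, inv_div]
      have hdecompR : B * (q:ℝ) + C = A := by rw [hA, hB, hC]; exact_mod_cast hdecomp
      have hABq : A/B = (q:ℝ) + C/B := by
        field_simp
        linarith [hdecompR]
      have hxinvq : x⁻¹ = (q:ℝ) + C/B := hxinv.trans hABq
      -- the key bound : |1/r - 1/x| < 1/(4 B (B-1))
      have hrx : r⁻¹ - x⁻¹ = (x - r)/(r*x) := by
        field_simp
      have habs : |r⁻¹ - x⁻¹| = |x - r|/(r*x) := by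
        rw [hrx, abs_div, abs_of_pos (mul_pos hrpos hx0)]
      have h1 : |x - r| < e := by rw [abs_sub_comm]; exact hr
      have hkey3 : (x - e)*x - e*(4*B*(B-1)) = (B*(4*A-4*B-1))/(4*A^2*(A-1)) := by
        rw [hedef, hxdef]; field_simp; ring
      have h2 : e*(4*B*(B-1)) ≤ (x-e)*x := by
        have hnum : (0:ℝ) ≤ (B*(4*A-4*B-1))/(4*A^2*(A-1)) := by
          apply div_nonneg
          · nlinarith
          · nlinarith
        linarith
      have h3 : (x - e) * x ≤ r * x := by nlinarith
      have h5 : |x - r| * (4*B*(B-1)) < r*x := by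
        calc |x - r| * (4*B*(B-1)) < e*(4*B*(B-1)) := by
              apply mul_lt_mul_of_pos_right h1 hβden
          _ ≤ (x-e)*x := h2
          _ ≤ r*x := h3
      have hβ : |r⁻¹ - x⁻¹| < 1/(4*B*(B-1)) := by
        rw [habs, div_lt_div_iff₀ (mul_pos hrpos hx0) hβden]
        linarith
      have habs2 := abs_lt.1 hβ
      have hβB : 1/(4*B*(B-1)) < 1/B := by
        have hkey4 : 1/B - 1/(4*B*(B-1)) = (4*B-5)/(4*B*(B-1)) := by
          field_simp; ring
        have : (0:ℝ) < (4*B-5)/(4*B*(B-1)) := div_pos (by linarith) hβden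
        linarith
      have hClbB : 1/B ≤ C/B := by gcongr
      have hCubB : C/B ≤ 1 - 1/B := by
        rw [div_le_iff₀ hBpos]
        have : (1 - 1/B)*B = B - 1 := by field_simp
        rw [this]; linarith
      have hfloor_rinv : ⌊r⁻¹⌋ = q := by
        rw [Int.floor_eq_iff]
        constructor
        · linarith
        · push_cast; linarith
      have hfloor_xinv : ⌊x⁻¹⌋ = q := by
        rw [hxinvq, Int.floor_eq_iff]
        constructor
        · linarith
        · push_cast; linarith
      have hfractx : C/B = Int.fract x⁻¹ := by
        rw [Int.fract, hfloor_xinv, hxinvq]; ring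
      have hfract_rinv : Int.fract r⁻¹ = r⁻¹ - q := by
        rw [Int.fract, hfloor_rinv]
      have hr''bound : |Int.fract r⁻¹ - C/B| < 1/(4*B*(B-1)) := by
        have heq2 : Int.fract r⁻¹ - C/B = r⁻¹ - x⁻¹ := by
          rw [hfract_rinv, hxinvq]; ring
        rw [heq2]; exact hβ
      -- shift lemmas
      have hshiftx : ∀ i, cfRem (C/B) i = cfRem x (i+1) := by
        intro i
        rw [cfRem_succ, hfx, hfractx, cfRem_fract]
      have hterm'' : cfRem (C/B) L' = 0 := by rw [hshiftx]; exact hterm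
      have hnonterm'' : ∀ i < L', cfRem (C/B) i ≠ 0 := by
        intro i hi
        rw [hshiftx]; exact hnonterm (i+1) (by omega)
      have hCBpos : 0 < C/B := div_pos (by linarith) hBpos
      have hL'pos : 1 ≤ L' := by
        by_contra h
        have hL0 : L' = 0 := by omega
        rw [hL0] at hterm''
        have : cfRem (C/B) 0 = C/B := Int.fract_eq_self.2 ⟨hCBpos.le, by linarith⟩
        rw [hterm''] at this
        exact absurd this.symm (ne_of_gt hCBpos)
      -- apply the induction hypothesis
      have hIH := IH n₂ n₃ (by omega) hn3pos hn3lt hcop''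
        (by rw [← hB, ← hC]; exact hterm'')
        (by rw [← hB, ← hC]; exact hnonterm'')
        (Int.fract r⁻¹)
        (by rw [← hB, ← hC]; exact hr''bound)
      rw [← hB, ← hC] at hIH
      -- translation lemmas
      have htrr : ∀ j, cfB r (j+2) = cfB (Int.fract r⁻¹) (j+1) := by
        intro j
        rw [show j+2 = (j+1)+1 from rfl, cfB_succ r (j+1), hfr, ← cfB_fract r⁻¹ j]
      have htrx : ∀ j, cfB x (j+2) = cfB (C/B) (j+1) := by
        intro j
        rw [show j+2 = (j+1)+1 from rfl, cfB_succ x (j+1), hfx, ← cfB_fract x⁻¹ j, ← hfractx]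
      have hBr1 : cfB r 1 = q := by
        show ⌊(cfRem r 0)⁻¹⌋ = q
        rw [hRem0r, hfloor_rinv]
      have hBx1 : cfB x 1 = q := by
        show ⌊(cfRem x 0)⁻¹⌋ = q
        rw [hRem0x, hfloor_xinv]
      rcases hIH with h | ⟨hh1, hh2, hh3⟩
      · left
        intro i hi
        rcases i with _ | i
        · rw [hB0r, hB0x]
        rcases i with _ | j
        · rw [hBr1, hBx1]
        · show cfB r (j+2) = cfB x (j+2)
          rw [htrr j, htrx j]
          exact h (j+1) (by omega)
      · right
        obtain ⟨k, rfl⟩ : ∃ k, L' = k+1 := ⟨L'-1, by omega⟩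
        refine ⟨?_, ?_, ?_⟩
        · intro i hi
          rcases i with _ | i
          · rw [hB0r, hB0x]
          rcases i with _ | j
          · rw [hBr1, hBx1]
          · show cfB r (j+2) = cfB x (j+2)
            rw [htrr j, htrx j]
            exact hh1 (j+1) (by omega)
        · show cfB r (k+2) = cfB x (k+2) - 1
          rw [htrr k, htrx k]
          exact hh2
        · show cfB r ((k+1)+2) = 1
          rw [htrr (k+1)]
          exact hh3


/-- Theorem 5: let `n₂/n₁` be a rational number with `n₁, n₂` coprime positive
integers, `n₂ < n₁`, `n₁ > 1`, whose (finite) continued fraction expansion is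
`[a 0; a 1, …, a L]` (i.e. the remainder `cfRem x L = 0` and all earlier
remainders are nonzero), and let `r` be a real number with continued fraction
expansion `[b 0; b 1, …]` where `b i = cfB r i`.  If
`|r − n₂/n₁| < 1/(4 n₁ (n₁ − 1))`, then either `b i = a i` for all `i ≤ L`,
or `b i = a i` for `i < L`, `b L = a L − 1` and `b (L+1) = 1`. -/
theorem stmt_5 (n₁ n₂ : ℤ) (hn1 : 1 < n₁) (hn2 : 0 < n₂) (h21 : n₂ < n₁)
    (hcop : Int.gcd n₂ n₁ = 1) (L : ℕ)
    (hterm : cfRem ((n₂ : ℝ) / (n₁ : ℝ)) L = 0)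
    (hnonterm : ∀ i < L, cfRem ((n₂ : ℝ) / (n₁ : ℝ)) i ≠ 0)
    (r : ℝ) (hr : |r - (n₂ : ℝ) / (n₁ : ℝ)| < 1 / (4 * (n₁ : ℝ) * ((n₁ : ℝ) - 1))) :
    (∀ i ≤ L, cfB r i = cfB ((n₂ : ℝ) / (n₁ : ℝ)) i) ∨
    ((∀ i < L, cfB r i = cfB ((n₂ : ℝ) / (n₁ : ℝ)) i) ∧
      cfB r L = cfB ((n₂ : ℝ) / (n₁ : ℝ)) L - 1 ∧ cfB r (L + 1) = 1) :=
  key L n₁ n₂ hn1 hn2 h21 hcop hterm hnonterm r hr
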